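/- Let A be a Noetherian local domain of Krull dimension at least 2. Then A has infinitely many prime ideals of height 1. -/

import Mathlib

/-!
We prove that a Noetherian local domain of Krull dimension at least 2 has infinitely many
height-one primes.  Since mathlib (at this version) does not have Krull's principal ideal
theorem, we develop the needed special case by hand, using symbolic powers and Nakayama's
lemma, following Kaplansky's classical argument.
-/

section Aux

open Ideal

/-- The `n`-th symbolic power of a prime ideal `Q`, defined elementarily as the saturation of
`Q ^ n` at the prime `Q`. -/
private def symb {B : Type*} [CommRing B] (Q : Ideal B) (hQ : Q.IsPrime) (n : ℕ) : Ideal B where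
  carrier := {b | ∃ s, s ∉ Q ∧ s * b ∈ Q ^ n}
  add_mem' := by
    rintro a b ⟨s, hs, hsa⟩ ⟨t, ht, htb⟩
    refine ⟨s * t, fun h => ((hQ.mem_or_mem h).elim hs ht), ?_⟩
    have : s * t * (a + b) = t * (s * a) + s * (t * b) := by ring
    rw [this]
    exact add_mem (Ideal.mul_mem_left _ _ hsa) (Ideal.mul_mem_left _ _ htb)
  zero_mem' := ⟨1, fun h => hQ.ne_top ((Ideal.eq_top_iff_one Q).mpr h), by simp⟩
  smul_mem' := by
    rintro c b ⟨s, hs, hsb⟩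
    refine ⟨s, hs, ?_⟩
    have : s * (c • b) = c * (s * b) := by simp only [smul_eq_mul]; ring
    rw [this]
    exact Ideal.mul_mem_left _ _ hsb

private lemma mem_symb {B : Type*} [CommRing B] {Q : Ideal B} {hQ : Q.IsPrime} {n : ℕ} {b : B} :
    b ∈ symb Q hQ n ↔ ∃ s, s ∉ Q ∧ s * b ∈ Q ^ n := Iff.rfl

private lemma pow_le_symb {B : Type*} [CommRing B] (Q : Ideal B) (hQ : Q.IsPrime) (n : ℕ) :
    Q ^ n ≤ symb Q hQ n := fun b hb =>
  ⟨1, fun h => hQ.ne_top ((Ideal.eq_top_iff_one Q).mpr h), by rwa [one_mul]⟩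

private lemma symb_anti {B : Type*} [CommRing B] (Q : Ideal B) (hQ : Q.IsPrime) {m n : ℕ}
    (h : m ≤ n) : symb Q hQ n ≤ symb Q hQ m := by
  rintro b ⟨s, hs, hsb⟩
  exact ⟨s, hs, Ideal.pow_le_pow_right h hsb⟩

private lemma symb_primary {B : Type*} [CommRing B] {Q : Ideal B} {hQ : Q.IsPrime} {n : ℕ}
    {a b : B} (hab : a * b ∈ symb Q hQ n) (hb : b ∉ Q) : a ∈ symb Q hQ n := by
  obtain ⟨s, hs, h⟩ := hab
  refine ⟨s * b, fun hm => (hQ.mem_or_mem hm).elim hs hb, ?_⟩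
  have : s * b * a = s * (a * b) := by ring
  rwa [this]

/-- A finitely generated module annihilated by a maximal ideal is Artinian. -/
private lemma isArtinian_of_torsion {R X : Type*} [CommRing R] [AddCommGroup X] [Module R X]
    {m : Ideal R} (hm : m.IsMaximal) (htop : (⊤ : Submodule R X).FG)
    (tors : ∀ a ∈ m, ∀ x : X, a • x = 0) : IsArtinian R X := by
  have hsing : ∀ y : X, IsArtinian R ↥(Submodule.span R {y}) := by
    intro y
    let f := LinearMap.toSpanSingleton R X y
    have hker : m ≤ LinearMap.ker f := fun a ha =>
      LinearMap.mem_ker.mpr (by simpa [f, LinearMap.toSpanSingleton_apply] using tors a ha y)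
    have hq : IsArtinian R (R ⧸ LinearMap.ker f) := by
      by_cases htop' : LinearMap.ker f = ⊤
      · rw [htop']
        haveI : Subsingleton (R ⧸ (⊤ : Submodule R R)) :=
          Submodule.Quotient.subsingleton_iff.mpr rfl
        haveI : Finite (R ⧸ (⊤ : Submodule R R)) := Finite.of_subsingleton
        exact isArtinian_of_finite
      · have heq : LinearMap.ker f = (m : Submodule R R) := (hm.eq_of_le htop' hker).symm
        rw [heq]
        haveI : IsSimpleModule R (R ⧸ (m : Submodule R R)) :=
          isSimpleModule_iff_isCoatom.mpr (Ideal.isMaximal_def.mp hm)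
        haveI : Finite (Submodule R (R ⧸ (m : Submodule R R))) := by
          open scoped IsSimpleOrder in exact inferInstance
        rw [isArtinian_iff]
        exact (inferInstance : WellFoundedLT (Submodule R (R ⧸ (m : Submodule R R)))).wf
    have hrange : IsArtinian R ↥(LinearMap.range f) :=
      isArtinian_of_linearEquiv f.quotKerEquivRange
    have hspan : Submodule.span R {y} = LinearMap.range f :=
      LinearMap.span_singleton_eq_range R X y
    rw [hspan]
    exact hrange
  have hsup : ∀ N₁ N₂ : Submodule R X,
      IsArtinian R ↥N₁ → IsArtinian R ↥N₂ → IsArtinian R ↥(N₁ ⊔ N₂) := by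
    intro N₁ N₂ h₁ h₂
    haveI := h₁; haveI := h₂
    exact isArtinian_sup N₁ N₂
  haveI htopA : IsArtinian R ↥(⊤ : Submodule R X) :=
    Submodule.fg_induction (motive := fun N _ => IsArtinian R ↥N) hsing
      (fun N₁ N₂ _ _ => hsup N₁ N₂) ⊤ htop
  exact isArtinian_of_linearEquiv (Submodule.topEquiv (R := R) (M := X))

/-- In a Noetherian ring, a quotient by an ideal containing a power of a maximal ideal is
an Artinian module. -/
private lemma artinian_quotient {R : Type*} [CommRing R] [IsNoetherianRing R] {m : Ideal R}
    (hm : m.IsMaximal) :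
    ∀ (k : ℕ) (I : Ideal R), m ^ k ≤ I → IsArtinian R (R ⧸ (I : Submodule R R))
  | 0, I, hI => by
      have hItop : I = ⊤ := top_le_iff.mp (by rw [← Ideal.one_eq_top, ← pow_zero m]; exact hI)
      haveI : Subsingleton (R ⧸ (I : Submodule R R)) :=
        Submodule.Quotient.subsingleton_iff.mpr (by rw [hItop])
      haveI : Finite (R ⧸ (I : Submodule R R)) := Finite.of_subsingleton
      exact isArtinian_of_finite
  | (k+1), I, hI => by
      set J : Ideal R := I ⊔ m ^ k with hJdef
      have hIJ : (I : Submodule R R) ≤ (J : Submodule R R) := le_sup_left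
      have hmkJ : m ^ k ≤ J := le_sup_right
      haveI IH : IsArtinian R (R ⧸ (J : Submodule R R)) := artinian_quotient hm k J hmkJ
      set N : Submodule R (R ⧸ (I : Submodule R R)) :=
        Submodule.map (I : Submodule R R).mkQ (J : Submodule R R) with hNdef
      refine (isArtinian_iff_submodule_quotient N).mpr ⟨?_, ?_⟩
      · -- the submodule `J/I` is f.g. and killed by `m`
        refine isArtinian_of_torsion hm ((Submodule.fg_top N).mpr (IsNoetherian.noetherian N)) ?_
        rintro a ha ⟨w, hw⟩
        obtain ⟨j, hj, rfl⟩ := hw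
        apply Subtype.ext
        show a • (Submodule.mkQ _ j) = 0
        rw [← map_smul]
        rw [Submodule.mkQ_apply, Submodule.Quotient.mk_eq_zero]
        obtain ⟨j₁, hj₁, j₂, hj₂, rfl⟩ := Submodule.mem_sup.mp hj
        have h1 : a * j₁ ∈ I := Ideal.mul_mem_left I a hj₁
        have h2 : a * j₂ ∈ I := by
          have hmul : a * j₂ ∈ m * m ^ k := Ideal.mul_mem_mul ha hj₂
          have hpow : m * m ^ k = m ^ (k + 1) := by rw [pow_succ, mul_comm]
          rw [hpow] at hmul
          exact hI hmul
        show a • (j₁ + j₂) ∈ (I : Submodule R R)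
        rw [smul_eq_mul, mul_add]
        exact add_mem h1 h2
      · exact isArtinian_of_linearEquiv
          (Submodule.quotientQuotientEquivQuotient (I : Submodule R R) (J : Submodule R R)
            hIJ).symm

/-- The key step (a special case of the consequences of Krull's principal ideal theorem):
in a Noetherian local domain, if the only prime containing `x` is the maximal ideal, then
there is no prime ideal strictly between `⊥` and the maximal ideal avoiding `x`. -/
private lemma no_between {B : Type*} [CommRing B] [IsDomain B] [IsNoetherianRing B]
    [IsLocalRing B] {Q : Ideal B} (hQ : Q.IsPrime) (hQ0 : Q ≠ ⊥) {x : B} (hxQ : x ∉ Q)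
    (hxM : x ∈ IsLocalRing.maximalIdeal B)
    (hx : ∀ P : Ideal B, P.IsPrime → x ∈ P → P = IsLocalRing.maximalIdeal B) : False := by
  classical
  set M := IsLocalRing.maximalIdeal B with hMdef
  have hMmax : M.IsMaximal := IsLocalRing.maximalIdeal.isMaximal B
  -- the radical of (x) is M
  have hrad : (Ideal.span {x}).radical = M := by
    rw [Ideal.radical_eq_sInf]
    apply le_antisymm
    · exact sInf_le ⟨(Ideal.span_singleton_le_iff_mem _).mpr hxM, hMmax.isPrime⟩
    · refine le_sInf fun J hJ => ?_
      exact le_of_eq (hx J hJ.2 (hJ.1 (Ideal.mem_span_singleton_self x))).symm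
  obtain ⟨k, hk⟩ := Ideal.exists_radical_pow_le_of_fg (Ideal.span {x})
    (IsNoetherian.noetherian _)
  rw [hrad] at hk
  -- B ⧸ (x) is Artinian
  haveI hart : IsArtinian B (B ⧸ ((Ideal.span {x} : Ideal B) : Submodule B B)) :=
    artinian_quotient hMmax k _ hk
  -- the descending chain of symbolic powers modulo (x) stabilizes
  let c : ℕ →o (Submodule B (B ⧸ ((Ideal.span {x} : Ideal B) : Submodule B B)))ᵒᵈ :=
    ⟨fun n => Submodule.map ((Ideal.span {x} : Ideal B) : Submodule B B).mkQ
        ((symb Q hQ n : Ideal B) : Submodule B B),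
     fun a b hab => Submodule.map_mono (symb_anti Q hQ hab)⟩
  obtain ⟨n, hn⟩ := IsArtinian.monotone_stabilizes c
  -- hence symb n ≤ symb j for all j ≥ n, by Nakayama
  have hstab : ∀ j, n ≤ j → symb Q hQ n ≤ symb Q hQ j := by
    intro j hj
    have hcn : Submodule.map ((Ideal.span {x} : Ideal B) : Submodule B B).mkQ
          ((symb Q hQ n : Ideal B) : Submodule B B)
        = Submodule.map ((Ideal.span {x} : Ideal B) : Submodule B B).mkQ
          ((symb Q hQ j : Ideal B) : Submodule B B) := hn j hj
    have hle : ((symb Q hQ n : Ideal B) : Submodule B B)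
        ≤ ((Ideal.span {x} : Ideal B) : Submodule B B) ⊔ (symb Q hQ j : Ideal B) := by
      calc ((symb Q hQ n : Ideal B) : Submodule B B)
          ≤ Submodule.comap ((Ideal.span {x} : Ideal B) : Submodule B B).mkQ
              (Submodule.map ((Ideal.span {x} : Ideal B) : Submodule B B).mkQ
                ((symb Q hQ n : Ideal B) : Submodule B B)) := Submodule.le_comap_map _ _
        _ = Submodule.comap ((Ideal.span {x} : Ideal B) : Submodule B B).mkQ
              (Submodule.map ((Ideal.span {x} : Ideal B) : Submodule B B).mkQ
                ((symb Q hQ j : Ideal B) : Submodule B B)) := by rw [hcn]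
        _ = _ := Submodule.comap_map_mkQ _ _
    have hstep : ((symb Q hQ n : Ideal B) : Submodule B B)
        ≤ ((symb Q hQ j : Ideal B) : Submodule B B)
          ⊔ (Ideal.span {x} : Ideal B) • ((symb Q hQ n : Ideal B) : Submodule B B) := by
      intro b hb
      obtain ⟨y, hy, z, hz, hyz⟩ := Submodule.mem_sup.mp (hle hb)
      obtain ⟨d, hd⟩ := Ideal.mem_span_singleton'.mp hy
      have hdx : d * x ∈ symb Q hQ n := by
        have hyb : d * x = b - z := by rw [hd, eq_sub_of_add_eq hyz]
        rw [hyb]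
        exact sub_mem hb (symb_anti Q hQ hj hz)
      have hdmem : d ∈ symb Q hQ n := symb_primary hdx hxQ
      have hy' : y ∈ (Ideal.span {x} : Ideal B) • ((symb Q hQ n : Ideal B) : Submodule B B) := by
        have hsm : x • d ∈ (Ideal.span {x} : Ideal B)
            • ((symb Q hQ n : Ideal B) : Submodule B B) :=
          Submodule.smul_mem_smul (Ideal.mem_span_singleton_self x) hdmem
        have : x • d = y := by rw [smul_eq_mul, mul_comm, hd]
        rwa [this] at hsm
      rw [← hyz]
      exact add_mem (Submodule.mem_sup_right hy') (Submodule.mem_sup_left hz)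
    have hjac : (Ideal.span {x} : Ideal B) ≤ Ideal.jacobson ⊥ := by
      rw [IsLocalRing.jacobson_eq_maximalIdeal ⊥ bot_ne_top]
      exact (Ideal.span_singleton_le_iff_mem _).mpr hxM
    exact Submodule.le_of_le_smul_of_le_jacobson_bot (IsNoetherian.noetherian _) hjac hstep
  -- conclude via Krull's intersection theorem in the localization at Q
  obtain ⟨q, hqQ, hq0⟩ := Submodule.exists_mem_ne_zero_of_ne_bot hQ0
  haveI := hQ
  haveI : IsDomain (Localization.AtPrime Q) := IsLocalization.isDomain_of_local_atPrime hQ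
  haveI : IsNoetherianRing (Localization.AtPrime Q) :=
    IsLocalization.isNoetherianRing Q.primeCompl (Localization.AtPrime Q) ‹IsNoetherianRing B›
  have hQL : Ideal.map (algebraMap B (Localization.AtPrime Q)) Q ≠ ⊤ := by
    rw [Localization.AtPrime.map_eq_maximalIdeal]
    exact (IsLocalRing.maximalIdeal.isMaximal (Localization.AtPrime Q)).ne_top
  have hmem : ∀ j : ℕ, (algebraMap B (Localization.AtPrime Q)) (q ^ n)
      ∈ (Ideal.map (algebraMap B (Localization.AtPrime Q)) Q) ^ j := by
    intro j
    have hq1 : q ^ n ∈ symb Q hQ n := pow_le_symb Q hQ n (Ideal.pow_mem_pow hqQ n)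
    have hq2 : q ^ n ∈ symb Q hQ (max n j) := hstab (max n j) (le_max_left n j) hq1
    obtain ⟨s, hs, hsq⟩ := symb_anti Q hQ (le_max_right n j) hq2
    have hunit : IsUnit ((algebraMap B (Localization.AtPrime Q)) s) :=
      IsLocalization.map_units (Localization.AtPrime Q) (⟨s, hs⟩ : Q.primeCompl)
    rw [← Ideal.unit_mul_mem_iff_mem _ hunit, ← _root_.map_mul]
    have h1 : s * q ^ n ∈ Q ^ j := hsq
    have h2 := Ideal.mem_map_of_mem (algebraMap B (Localization.AtPrime Q)) h1
    rwa [Ideal.map_pow] at h2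
  have hzero : (algebraMap B (Localization.AtPrime Q)) (q ^ n) = 0 := by
    have hh : (algebraMap B (Localization.AtPrime Q)) (q ^ n)
        ∈ ⨅ j : ℕ, (Ideal.map (algebraMap B (Localization.AtPrime Q)) Q) ^ j :=
      Submodule.mem_iInf _ |>.mpr hmem
    rwa [Ideal.iInf_pow_eq_bot_of_isDomain _ hQL, Ideal.mem_bot] at hh
  have : (q : B) ^ n = 0 :=
    IsLocalization.injective (Localization.AtPrime Q) Q.primeCompl_le_nonZeroDivisors
      (by rw [hzero, map_zero])
  exact pow_ne_zero n hq0 this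

end Aux

/-- A Noetherian local domain of Krull dimension at least `2` has infinitely many prime ideals
of height `1`. -/
theorem stmt_8 {A : Type*} [CommRing A] [IsDomain A] [IsNoetherianRing A] [IsLocalRing A]
    (h : 2 ≤ ringKrullDim A) :
    {p : PrimeSpectrum A | Order.height p = 1}.Infinite := by
  by_contra hinf
  rw [Set.not_infinite] at hinf
  classical
  set m : Ideal A := IsLocalRing.maximalIdeal A with hmdef
  have hmP : m.IsPrime := (IsLocalRing.maximalIdeal.isMaximal A).isPrime
  set cls : PrimeSpectrum A := ⟨m, hmP⟩ with hclsdef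
  -- the closed point has height at least 2
  have h2 : (2 : ℕ∞) ≤ Order.height cls := by
    have hKD : ringKrullDim A = Order.krullDim (PrimeSpectrum A) := rfl
    rw [hKD, Order.krullDim_eq_iSup_height_of_nonempty] at h
    have h' : (2 : ℕ∞) ≤ ⨆ a : PrimeSpectrum A, Order.height a := by
      have heq : (2 : WithBot ℕ∞) = ((2 : ℕ∞) : WithBot ℕ∞) := rfl
      rw [heq] at h
      exact WithBot.coe_le_coe.mp h
    refine h'.trans (iSup_le fun a => Order.height_mono ?_)
    exact (PrimeSpectrum.asIdeal_le_asIdeal a cls).mp (IsLocalRing.le_maximalIdeal a.2.ne_top)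
  have hm0 : m ≠ ⊥ := by
    intro hbot
    have hc : cls = (⊥ : PrimeSpectrum A) := PrimeSpectrum.ext hbot
    rw [hc, Order.height_bot] at h2
    simp at h2
  -- prime avoidance: pick x in m outside ⊥ and all height-one primes
  have hne : ∀ p ∈ hinf.toFinset, ¬ m ≤ p.asIdeal := by
    intro p hp hle
    have hple : p.asIdeal ≤ m := IsLocalRing.le_maximalIdeal p.2.ne_top
    have hpc : p = cls := PrimeSpectrum.ext (le_antisymm hple hle)
    have h1 : Order.height p = 1 := (Set.Finite.mem_toFinset hinf).mp hp
    rw [hpc] at h1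
    rw [h1] at h2
    norm_num at h2
  set s' : Finset (PrimeSpectrum A) := insert ⊥ hinf.toFinset with hs'def
  have havoid : ¬ ((m : Set A) ⊆ ⋃ p ∈ (s' : Set (PrimeSpectrum A)), (p.asIdeal : Set A)) := by
    rw [Ideal.subset_union_prime ⊥ ⊥ (fun p _ _ _ => p.2)]
    rintro ⟨p, hp, hle⟩
    rcases Finset.mem_insert.mp hp with rfl | hp'
    · exact hm0 (le_bot_iff.mp hle)
    · exact hne p hp' hle
  obtain ⟨x, hxm, hx⟩ := Set.not_subset.mp havoid
  have hx0 : x ≠ 0 := by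
    intro hx0
    refine hx (Set.mem_biUnion (Finset.mem_coe.mpr (Finset.mem_insert_self _ _)) ?_)
    show x ∈ ((⊥ : PrimeSpectrum A).asIdeal : Set A)
    simp [hx0]
  have hxS : ∀ p : PrimeSpectrum A, Order.height p = 1 → x ∉ p.asIdeal := by
    intro p hp hxp
    exact hx (Set.mem_biUnion
      (Finset.mem_coe.mpr (Finset.mem_insert_of_mem (hinf.mem_toFinset.mpr hp))) hxp)
  -- a minimal prime over (x)
  have hspan : Ideal.span {x} ≤ m := (Ideal.span_singleton_le_iff_mem _).mpr hxm
  haveI : m.IsPrime := hmP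
  obtain ⟨P, hPmin, hPle⟩ := Ideal.exists_minimalPrimes_le (J := m) hspan
  have hPprime : P.IsPrime := hPmin.1.1
  have hxP : x ∈ P := hPmin.1.2 (Ideal.mem_span_singleton_self x)
  have hP0 : P ≠ ⊥ := by
    intro hb
    rw [hb] at hxP
    exact hx0 (Ideal.mem_bot.mp hxP)
  set PS : PrimeSpectrum A := ⟨P, hPprime⟩ with hPSdef
  have hPSheight : (2 : ℕ∞) ≤ Order.height PS := by
    have hne1 : Order.height PS ≠ 1 := fun hh => hxS PS hh hxP
    have hne0 : Order.height PS ≠ 0 := by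
      simp only [ne_eq, Order.height_eq_zero]
      intro hmin
      exact hP0 (congrArg PrimeSpectrum.asIdeal (isMin_iff_eq_bot.mp hmin))
    have h1lt : 1 < Order.height PS :=
      lt_of_le_of_ne (ENat.one_le_iff_ne_zero.mpr hne0) (Ne.symm hne1)
    have := (ENat.add_one_le_iff (by simp : (1 : ℕ∞) ≠ ⊤)).mpr h1lt
    simpa [one_add_one_eq_two] using this
  obtain ⟨r, hrlast, hrlen⟩ := Order.exists_series_of_le_height PS (n := 2)
    (by exact_mod_cast hPSheight)
  -- the middle prime of the chain
  have hlen0 : (0 : ℕ) < r.length + 1 := by omega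
  have hlen1 : (1 : ℕ) < r.length + 1 := by omega
  have h01 : r ⟨0, hlen0⟩ < r ⟨1, hlen1⟩ :=
    r.strictMono (show (⟨0, hlen0⟩ : Fin (r.length + 1)) < ⟨1, hlen1⟩ by
      rw [Fin.mk_lt_mk]; omega)
  have h12 : r ⟨1, hlen1⟩ < PS := by
    rw [← hrlast]
    have hlast : r.last = r ⟨r.length, by omega⟩ := rfl
    rw [hlast]
    exact r.strictMono (by rw [Fin.mk_lt_mk]; omega)
  set q1 : PrimeSpectrum A := r ⟨1, hlen1⟩ with hq1def
  set Q : Ideal A := q1.asIdeal with hQdef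
  have hQprime : Q.IsPrime := q1.2
  have hQ0 : Q ≠ ⊥ := by
    intro hb
    have hbot : (⊥ : PrimeSpectrum A) < q1 := lt_of_le_of_lt bot_le h01
    exact hbot.ne' (PrimeSpectrum.ext hb)
  have hQP : Q < P := (PrimeSpectrum.asIdeal_lt_asIdeal q1 PS).mpr h12
  have hxQ : x ∉ Q := by
    intro hxQ
    have hPQ : P ≤ Q :=
      hPmin.2 ⟨hQprime, (Ideal.span_singleton_le_iff_mem _).mpr hxQ⟩ hQP.le
    exact hQP.not_ge hPQ
  -- pass to the localization at P
  haveI := hPprime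
  set B := Localization.AtPrime P with hBdef
  haveI : IsDomain B := IsLocalization.isDomain_of_local_atPrime hPprime
  haveI : IsNoetherianRing B :=
    IsLocalization.isNoetherianRing P.primeCompl B ‹IsNoetherianRing A›
  set f := algebraMap A B with hfdef
  have hdisj : Disjoint (P.primeCompl : Set A) (Q : Set A) :=
    Set.disjoint_left.mpr fun s hs hsQ => hs (hQP.le hsQ)
  have hQ'prime : (Ideal.map f Q).IsPrime :=
    IsLocalization.isPrime_of_isPrime_disjoint P.primeCompl B Q hQprime hdisj
  have hcomapQ : Ideal.comap f (Ideal.map f Q) = Q :=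
    IsLocalization.comap_map_of_isPrime_disjoint P.primeCompl B hQprime hdisj
  have hQ'0 : Ideal.map f Q ≠ ⊥ := by
    obtain ⟨q, hq, hq0⟩ := Submodule.exists_mem_ne_zero_of_ne_bot hQ0
    intro hbot
    have h1 : f q ∈ Ideal.map f Q := Ideal.mem_map_of_mem f hq
    rw [hbot, Ideal.mem_bot] at h1
    exact hq0 (IsLocalization.injective B P.primeCompl_le_nonZeroDivisors
      (by rw [h1, map_zero]))
  have hx'Q' : f x ∉ Ideal.map f Q := fun hmem => hxQ (hcomapQ ▸ Ideal.mem_comap.mpr hmem)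
  have hx'M : f x ∈ IsLocalRing.maximalIdeal B := by
    rw [← Localization.AtPrime.map_eq_maximalIdeal]
    exact Ideal.mem_map_of_mem f hxP
  have hx' : ∀ P' : Ideal B, P'.IsPrime → f x ∈ P' → P' = IsLocalRing.maximalIdeal B := by
    intro P' hP' hmem
    have hd := (IsLocalization.isPrime_iff_isPrime_disjoint P.primeCompl B P').mp hP'
    have hle : Ideal.comap f P' ≤ P := by
      intro t ht
      by_contra htP
      exact Set.disjoint_left.mp hd.2 htP ht
    have hge : P ≤ Ideal.comap f P' :=
      hPmin.2 ⟨hd.1, (Ideal.span_singleton_le_iff_mem _).mpr (Ideal.mem_comap.mpr hmem)⟩ hle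
    have hPeq : Ideal.comap f P' = P := le_antisymm hle hge
    rw [← IsLocalization.map_comap P.primeCompl B P']
    change Ideal.map f (Ideal.comap f P') = _
    rw [hPeq,
      Localization.AtPrime.map_eq_maximalIdeal]
  exact no_between hQ'prime hQ'0 hx'Q' hx'M hx'
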